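/- Let η : Fin (n+1) → ℝ be nondecreasing with η₁ ≤ 0, σ_k its partial sums, and suppose σ_{p+1} ≥ p for some 2 ≤ p ≤ n/2. Writing θ_p = σ_{p+1} − η₁, one has σ_{n+2−p} ≥ ((n+1−p)/p)·θ_p + η₁ ≥ (n+1−p) − η₁·(n+1−2p)/p ≥ n+1−p. -/

import Mathlib

noncomputable section
open Finset

/-- 1-indexed access to the sequence `η₁ ≤ ⋯ ≤ η_{n+1}` -/
def eta1 (n : ℕ) (η : Fin (n+1) → ℝ) (i : ℕ) : ℝ :=
  if h : i - 1 < n + 1 then η ⟨i - 1, h⟩ else 0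

/-- the partial sum `σ_k = η₁ + ⋯ + η_k` -/
def sig (n : ℕ) (η : Fin (n+1) → ℝ) (k : ℕ) : ℝ :=
  ∑ i ∈ Finset.Icc 1 k, eta1 n η i

lemma avg_mono (f : ℕ → ℝ) (k m : ℕ) (hk : 1 ≤ k) (hkm : k ≤ m)
    (hf : ∀ i j, i ≤ j → j < m → f i ≤ f j) :
    (m : ℝ) * ∑ i ∈ Finset.range k, f i ≤ (k : ℝ) * ∑ i ∈ Finset.range m, f i := by
  have hsplit : ∑ i ∈ Finset.range m, f i
      = ∑ i ∈ Finset.range k, f i + ∑ i ∈ Finset.Ico k m, f i := by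
    rw [Finset.range_eq_Ico, Finset.range_eq_Ico]
    exact (Finset.sum_Ico_consecutive f (Nat.zero_le k) hkm).symm
  set c := f (k - 1) with hc
  have hub : ∑ i ∈ Finset.range k, f i ≤ (k : ℝ) * c := by
    calc ∑ i ∈ Finset.range k, f i ≤ (Finset.range k).card • c := by
          apply Finset.sum_le_card_nsmul
          intro i hi
          simp only [Finset.mem_range] at hi
          exact hf i (k-1) (Nat.le_pred_of_lt hi) (by omega)
      _ = (k : ℝ) * c := by simp [nsmul_eq_mul]
  have hlb : ((m - k : ℕ) : ℝ) * c ≤ ∑ i ∈ Finset.Ico k m, f i := by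
    calc ((m - k : ℕ) : ℝ) * c = (Finset.Ico k m).card • c := by
          simp [Nat.card_Ico, nsmul_eq_mul]
      _ ≤ ∑ i ∈ Finset.Ico k m, f i := by
          apply Finset.card_nsmul_le_sum
          intro i hi
          simp only [Finset.mem_Ico] at hi
          exact hf (k-1) i (by omega) hi.2
  have hmk : ((m - k : ℕ) : ℝ) = (m : ℝ) - k := by
    push_cast [Nat.cast_sub hkm]; ring
  have hk0 : (0:ℝ) ≤ (k:ℝ) := by positivity
  have hmk0 : (0:ℝ) ≤ (m:ℝ) - k := by
    rw [← hmk]; positivity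
  rw [hsplit]
  rw [hmk] at hlb
  nlinarith [mul_le_mul_of_nonneg_left hlb hk0, mul_le_mul_of_nonneg_left hub hmk0]

lemma sig_shift (n : ℕ) (η : Fin (n+1) → ℝ) (k : ℕ) :
    sig n η (k + 1) = eta1 n η 1 + ∑ i ∈ Finset.range k, eta1 n η (i + 2) := by
  have h : Finset.Icc 1 (k+1) = Finset.Ico 1 (k+2) := by
    ext x; simp [Nat.lt_succ_iff]
  rw [sig, h, Finset.sum_Ico_eq_sum_range]
  rw [show k + 2 - 1 = k + 1 by omega, Finset.sum_range_succ']
  rw [add_comm]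
  congr 1
  · apply Finset.sum_congr rfl
    intro i _
    congr 1
    omega

theorem sigma_chain_nonpos_case (n p : ℕ) (η : Fin (n+1) → ℝ) (hmono : Monotone η)
    (h1 : eta1 n η 1 ≤ 0) (hp : 2 ≤ p) (hpn : 2 * p ≤ n)
    (hs : (p : ℝ) ≤ sig n η (p + 1)) :
    sig n η (n + 2 - p) ≥
        (((n : ℝ) + 1 - p) / p) * (sig n η (p + 1) - eta1 n η 1) + eta1 n η 1 ∧
    (((n : ℝ) + 1 - p) / p) * (sig n η (p + 1) - eta1 n η 1) + eta1 n η 1 ≥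
        ((n : ℝ) + 1 - p) - eta1 n η 1 * ((n : ℝ) + 1 - 2 * p) / p ∧
    ((n : ℝ) + 1 - p) - eta1 n η 1 * ((n : ℝ) + 1 - 2 * p) / p ≥
        (n : ℝ) + 1 - p := by
  set e := eta1 n η 1 with he
  have hp0 : (0:ℝ) < p := by positivity
  set m := n + 1 - p with hm
  have hm1 : n + 2 - p = m + 1 := by omega
  have hmcast : ((m : ℕ) : ℝ) = (n : ℝ) + 1 - p := by
    push_cast [hm, Nat.cast_sub (by omega : p ≤ n + 1)]; ring
  set f : ℕ → ℝ := fun i => eta1 n η (i + 2) with hf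
  have hfmono : ∀ i j, i ≤ j → j < m → f i ≤ f j := by
    intro i j hij hjm
    have hj : j + 1 < n + 1 := by omega
    have hi : i + 1 < n + 1 := by omega
    simp only [hf, eta1]
    rw [show i + 2 - 1 = i + 1 by omega, show j + 2 - 1 = j + 1 by omega,
      dif_pos hi, dif_pos hj]
    exact hmono (by exact_mod_cast Nat.succ_le_succ hij)
  have hsp : sig n η (p + 1) = e + ∑ i ∈ Finset.range p, f i := sig_shift n η p
  have hsm : sig n η (n + 2 - p) = e + ∑ i ∈ Finset.range m, f i := by
    rw [hm1]; exact sig_shift n η m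
  have hkey := avg_mono f p m (by omega) (by omega) hfmono
  have hthree : ((n : ℝ) + 1 - p) - e * ((n : ℝ) + 1 - 2 * p) / p ≥ (n : ℝ) + 1 - p := by
    have h2p : (0:ℝ) ≤ (n : ℝ) + 1 - 2 * p := by
      have : (2 * p : ℕ) ≤ n := hpn
      have := (Nat.cast_le (α := ℝ)).mpr this
      push_cast at this ⊢; linarith
    have hX : e * ((n : ℝ) + 1 - 2 * p) ≤ 0 := mul_nonpos_of_nonpos_of_nonneg h1 h2p
    have : e * ((n : ℝ) + 1 - 2 * p) / p ≤ 0 := div_nonpos_iff.mpr (Or.inr ⟨hX, hp0.le⟩)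
    linarith
  refine ⟨?_, ?_, hthree⟩
  · -- first inequality
    rw [hsp, hsm, ge_iff_le]
    have hc : e + ∑ i ∈ Finset.range p, f i - e = ∑ i ∈ Finset.range p, f i := by ring
    rw [hc]
    have : (((n : ℝ) + 1 - p) / p) * ∑ i ∈ Finset.range p, f i ≤ ∑ i ∈ Finset.range m, f i := by
      rw [div_mul_eq_mul_div, div_le_iff₀ hp0]
      rw [← hmcast]
      nlinarith [hkey]
    linarith
  · -- second inequality
    rw [ge_iff_le, ← sub_nonneg]
    have hσ : (p:ℝ) ≤ sig n η (p+1) := hs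
    have hcoef : (0:ℝ) ≤ ((n : ℝ) + 1 - p) / p := by
      apply div_nonneg _ hp0.le
      have : (p:ℝ) ≤ n := by exact_mod_cast (by omega : p ≤ n)
      linarith
    have hexpand : (((n : ℝ) + 1 - p) / p) * (sig n η (p+1) - e) + e -
        (((n : ℝ) + 1 - p) - e * ((n : ℝ) + 1 - 2 * p) / p)
        = (((n : ℝ) + 1 - p) / p) * (sig n η (p+1) - p) := by
      field_simp
      ring
    rw [hexpand]
    exact mul_nonneg hcoef (by linarith)
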